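/- arXiv:2603.28989 — 2 statements merged into one kernel-verified Lean document; each statement's English description precedes it below -/
import Mathlib

section
/- Conditional on the underlying data, the plug-in estimators built from 1-bit dithered quantized samples are unbiased: E[Σ̂ | X_1,…,X_n] = (1/n) Σ_{i=1}^n X_i X_iᵀ and E[Σ̂_{Xy} | (X_1,Y_1),…,(X_n,Y_n)] = (1/n) Σ_{i=1}^n X_i Y_i, where the expectations are taken with respect to the randomness of the quantization only. Consequently the estimating equation Ψ(β) := Σ̂β − Σ̂_{Xy} is unbiased at β = β*, i.e. E[Ψ(β*)] = 0. -/
open MeasureTheory ProbabilityTheory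

def IsOneBitQuant {Ω : Type*} [MeasurableSpace Ω] (μ : Measure Ω)
    (ℓ u z : ℝ) (Q : Ω → ℝ) : Prop :=
  Measurable Q ∧ (∀ ω, Q ω = ℓ ∨ Q ω = u) ∧
    μ {ω | Q ω = u} = ENNReal.ofReal ((z - ℓ) / (u - ℓ))

lemma quant_bdd {Ω : Type*} [MeasurableSpace Ω] {μ : Measure Ω}
    {ℓ u z : ℝ} {Q : Ω → ℝ} (h : IsOneBitQuant μ ℓ u z Q) (ω : Ω) :
    ‖Q ω‖ ≤ max |ℓ| |u| := by
  rcases h.2.1 ω with hω | hω <;> rw [hω]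
  · exact le_max_left _ _
  · exact le_max_right _ _

lemma quant_integrable {Ω : Type*} [MeasurableSpace Ω] {μ : Measure Ω}
    [IsProbabilityMeasure μ] {ℓ u z : ℝ} {Q : Ω → ℝ}
    (h : IsOneBitQuant μ ℓ u z Q) : Integrable Q μ := by
  refine (integrable_const (max |ℓ| |u|)).mono' h.1.aestronglyMeasurable ?_
  filter_upwards with ω using quant_bdd h ω

lemma quant_integral {Ω : Type*} [MeasurableSpace Ω] {μ : Measure Ω}
    [IsProbabilityMeasure μ] {ℓ u z : ℝ} {Q : Ω → ℝ}
    (h : IsOneBitQuant μ ℓ u z Q) (hlt : ℓ < u) (hz : ℓ ≤ z) :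
    ∫ ω, Q ω ∂μ = z := by
  have hne : u - ℓ ≠ 0 := sub_ne_zero.2 (ne_of_gt hlt)
  have hQ : ∀ ω, Q ω = ℓ + (u - ℓ) * Set.indicator {ω | Q ω = u} (fun _ => (1:ℝ)) ω := by
    intro ω
    rcases h.2.1 ω with hω | hω
    · rw [Set.indicator_of_notMem, hω]
      · ring
      · simp only [Set.mem_setOf_eq, hω]
        exact fun hc => (ne_of_gt hlt) hc.symm
    · rw [Set.indicator_of_mem, hω]
      · ring
      · exact hω
  have hmeas : MeasurableSet {ω | Q ω = u} := h.1 (measurableSet_singleton u)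
  calc ∫ ω, Q ω ∂μ
      = ∫ ω, (ℓ + (u - ℓ) * Set.indicator {ω | Q ω = u} (fun _ => (1:ℝ)) ω) ∂μ := by
        exact integral_congr_ae (Filter.Eventually.of_forall hQ)
    _ = ℓ + (u - ℓ) * (μ {ω | Q ω = u}).toReal := by
        rw [integral_add (integrable_const _), integral_const, MeasureTheory.integral_const_mul]
        · have : (∫ a, Set.indicator {ω | Q ω = u} (fun _ => (1:ℝ)) a ∂μ) = (μ {ω | Q ω = u}).toReal := integral_indicator_one hmeas
          rw [this]; simp
        · exact ((integrable_indicator_iff hmeas).2 (integrableOn_const)).const_mul _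
    _ = z := by
        rw [h.2.2, ENNReal.toReal_ofReal (div_nonneg (by linarith) (by linarith))]
        field_simp
        ring

/-- conditional on the underlying data, the plug-in estimators built from
1-bit dithered quantized samples are unbiased:
`E[Σ̂ | X] = (1/n) ∑ᵢ XᵢXᵢᵀ` and `E[Σ̂_{Xy} | X, Y] = (1/n) ∑ᵢ XᵢYᵢ`
(expectations over the quantization randomness `μ₁` only); consequently the estimating
equation `Ψ(β) = Σ̂β − Σ̂_{Xy}` is unbiased at `β = β*`, i.e. `E[Ψ(β*)] = 0`, where the
outer expectation is also over the noise randomness `μ₂`. The design `X` is treated as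
fixed, the responses `Yᵢ = Xᵢᵀβ* + σεᵢ` carry the randomness of the noise `ε` (on `Ω₂`),
and the quantization randomness lives on `Ω₁`. -/
theorem stmt_0 {Ω₁ Ω₂ : Type*} [MeasurableSpace Ω₁] [MeasurableSpace Ω₂]
    (μ₁ : Measure Ω₁) (μ₂ : Measure Ω₂)
    [IsProbabilityMeasure μ₁] [IsProbabilityMeasure μ₂]
    (n d : ℕ) (hn : 0 < n)
    (R L σ : ℝ) (hR : 0 < R) (hL : 0 < L)
    -- the (fixed, i.e. conditioned-upon) design
    (X : Fin n → Fin d → ℝ) (hX : ∀ i j, |X i j| ≤ R)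
    (βs : Fin d → ℝ)
    -- the noise variables
    (ε : Fin n → Ω₂ → ℝ) (hmeasε : ∀ i, Measurable (ε i))
    (hintε : ∀ i, Integrable (ε i) μ₂) (hmeanε : ∀ i, ∫ ω₂, ε i ω₂ ∂μ₂ = 0)
    -- the responses, following the linear model
    (Y : Fin n → Ω₂ → ℝ) (hY : ∀ i ω₂, Y i ω₂ = (∑ j, X i j * βs j) + σ * ε i ω₂)
    (hYbdd : ∀ i ω₂, |Y i ω₂| ≤ L)
    -- the 1-bit dithered quantizations
    (Xt Xsq : Fin n → Fin d → Ω₁ → ℝ) (Yt : Fin n → Ω₁ → Ω₂ → ℝ)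
    (hXt : ∀ i j, IsOneBitQuant μ₁ (-R) R (X i j) (Xt i j))
    (hXsq : ∀ i j, IsOneBitQuant μ₁ 0 (R ^ 2) (X i j ^ 2) (Xsq i j))
    (hYt : ∀ i ω₂, IsOneBitQuant μ₁ (-L) L (Y i ω₂) (fun ω₁ => Yt i ω₁ ω₂))
    (hYtmeas : ∀ i, Measurable fun p : Ω₁ × Ω₂ => Yt i p.1 p.2)
    -- all quantizations are mutually independent (given the data)
    (hindep : ∀ ω₂ : Ω₂, iIndepFun
      (fun k : (Fin n × Fin d) ⊕ (Fin n × Fin d) ⊕ Fin n =>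
        Sum.elim (fun p ω₁ => Xt p.1 p.2 ω₁)
          (Sum.elim (fun p ω₁ => Xsq p.1 p.2 ω₁) (fun i ω₁ => Yt i ω₁ ω₂)) k) μ₁)
    -- the plug-in estimators
    (Shat : Ω₁ → Fin d → Fin d → ℝ)
    (hShat : ∀ ω₁ j k, Shat ω₁ j k =
      (n : ℝ)⁻¹ * ∑ i, (Xt i j ω₁ * Xt i k ω₁ + if j = k then Xsq i j ω₁ - R ^ 2 else 0))
    (ShatXy : Ω₁ → Ω₂ → Fin d → ℝ)
    (hShatXy : ∀ ω₁ ω₂ j, ShatXy ω₁ ω₂ j = (n : ℝ)⁻¹ * ∑ i, Xt i j ω₁ * Yt i ω₁ ω₂) :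
    (∀ j k, ∫ ω₁, Shat ω₁ j k ∂μ₁ = (n : ℝ)⁻¹ * ∑ i, X i j * X i k) ∧
    (∀ ω₂ j, ∫ ω₁, ShatXy ω₁ ω₂ j ∂μ₁ = (n : ℝ)⁻¹ * ∑ i, X i j * Y i ω₂) ∧
    (∀ j, ∫ ω₂, (∫ ω₁, ((∑ k, Shat ω₁ j k * βs k) - ShatXy ω₁ ω₂ j) ∂μ₁) ∂μ₂ = 0) := by
  have hΩ₂ : Nonempty Ω₂ := by
    by_contra h
    rw [not_nonempty_iff] at h
    have h1 := measure_univ (μ := μ₂)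
    rw [Set.univ_eq_empty_iff.2 h, measure_empty] at h1
    exact zero_ne_one h1
  -- basic facts
  have EXt : ∀ i j, ∫ ω₁, Xt i j ω₁ ∂μ₁ = X i j := fun i j =>
    quant_integral (hXt i j) (by linarith) (neg_le_of_abs_le (hX i j))
  have EXsq : ∀ i j, ∫ ω₁, Xsq i j ω₁ ∂μ₁ = X i j ^ 2 := fun i j =>
    quant_integral (hXsq i j) (by positivity) (sq_nonneg _)
  have EYt : ∀ i ω₂, ∫ ω₁, Yt i ω₁ ω₂ ∂μ₁ = Y i ω₂ := fun i ω₂ =>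
    quant_integral (hYt i ω₂) (by linarith) (neg_le_of_abs_le (hYbdd i ω₂))
  have iXt : ∀ i j, Integrable (Xt i j) μ₁ := fun i j => quant_integrable (hXt i j)
  have iXsq : ∀ i j, Integrable (Xsq i j) μ₁ := fun i j => quant_integrable (hXsq i j)
  have iYt : ∀ i ω₂, Integrable (fun ω₁ => Yt i ω₁ ω₂) μ₁ := fun i ω₂ =>
    quant_integrable (hYt i ω₂)
  -- integrability of the summands of Shat
  have isum : ∀ i j k, Integrable
      (fun ω₁ => Xt i j ω₁ * Xt i k ω₁ + if j = k then Xsq i j ω₁ - R ^ 2 else 0) μ₁ := by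
    intro i j k
    have h1 : Integrable (fun ω₁ => Xt i j ω₁ * Xt i k ω₁) μ₁ :=
      (iXt i k).bdd_mul (iXt i j).1 (Filter.Eventually.of_forall (quant_bdd (hXt i j)))
    by_cases hjk : j = k
    · subst hjk
      simp only [eq_self_iff_true, if_true]
      exact h1.add ((iXsq i j).sub (integrable_const _))
    · simpa [hjk] using h1
  -- expected values of products with Xt, via independence
  have EXtXt : ∀ (i : Fin n) (j k : Fin d), j ≠ k →
      ∫ ω₁, Xt i j ω₁ * Xt i k ω₁ ∂μ₁ = X i j * X i k := by
    intro i j k hjk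
    have hind : IndepFun (Xt i j) (Xt i k) μ₁ :=
      (hindep hΩ₂.some).indepFun
        (i := Sum.inl (i, j)) (j := Sum.inl (i, k)) (by simp [hjk])
    have h : ∫ ω₁, Xt i j ω₁ * Xt i k ω₁ ∂μ₁ =
        (∫ ω₁, Xt i j ω₁ ∂μ₁) * ∫ ω₁, Xt i k ω₁ ∂μ₁ :=
      hind.integral_mul_eq_mul_integral (iXt i j).1 (iXt i k).1
    rw [h, EXt, EXt]
  have EXtYt : ∀ (i : Fin n) (j : Fin d) (ω₂ : Ω₂),
      ∫ ω₁, Xt i j ω₁ * Yt i ω₁ ω₂ ∂μ₁ = X i j * Y i ω₂ := by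
    intro i j ω₂
    have hind : IndepFun (Xt i j) (fun ω₁ => Yt i ω₁ ω₂) μ₁ :=
      (hindep ω₂).indepFun
        (i := Sum.inl (i, j)) (j := Sum.inr (Sum.inr i)) (by simp)
    have h : ∫ ω₁, Xt i j ω₁ * Yt i ω₁ ω₂ ∂μ₁ =
        (∫ ω₁, Xt i j ω₁ ∂μ₁) * ∫ ω₁, Yt i ω₁ ω₂ ∂μ₁ :=
      hind.integral_mul_eq_mul_integral (iXt i j).1 (iYt i ω₂).1
    rw [h, EXt, EYt]
  -- Part 1
  have part1 : ∀ j k, ∫ ω₁, Shat ω₁ j k ∂μ₁ = (n : ℝ)⁻¹ * ∑ i, X i j * X i k := by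
    intro j k
    simp only [hShat]
    rw [MeasureTheory.integral_const_mul, integral_finset_sum _ (fun i _ => isum i j k)]
    congr 1
    refine Finset.sum_congr rfl fun i _ => ?_
    by_cases hjk : j = k
    · subst hjk
      have hsq : ∀ ω₁, Xt i j ω₁ * Xt i j ω₁ +
          (if j = j then Xsq i j ω₁ - R ^ 2 else 0) = Xsq i j ω₁ := by
        intro ω₁
        rw [if_pos rfl]
        rcases (hXt i j).2.1 ω₁ with hω | hω <;> rw [hω] <;> ring
      rw [integral_congr_ae (Filter.Eventually.of_forall hsq), EXsq]
      ring
    · simp only [if_neg hjk, add_zero]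
      exact EXtXt i j k hjk
  have part2 : ∀ ω₂ j, ∫ ω₁, ShatXy ω₁ ω₂ j ∂μ₁ = (n : ℝ)⁻¹ * ∑ i, X i j * Y i ω₂ := by
    intro ω₂ j
    simp only [hShatXy]
    rw [MeasureTheory.integral_const_mul,
      integral_finset_sum _ (fun i _ => (iYt i ω₂).bdd_mul (iXt i j).1
        (Filter.Eventually.of_forall (quant_bdd (hXt i j))))]
    congr 1
    exact Finset.sum_congr rfl fun i _ => EXtYt i j ω₂
  refine ⟨part1, part2, ?_⟩
  -- Part 3
  intro j
  have iShat : ∀ k, Integrable (fun ω₁ => Shat ω₁ j k) μ₁ := by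
    intro k
    have heq : (fun ω₁ => Shat ω₁ j k) = fun ω₁ =>
        (n : ℝ)⁻¹ * ∑ i, (Xt i j ω₁ * Xt i k ω₁ + if j = k then Xsq i j ω₁ - R ^ 2 else 0) :=
      funext fun ω₁ => hShat ω₁ j k
    rw [heq]
    exact (integrable_finset_sum _ (fun i _ => isum i j k)).const_mul _
  have iShatXy : ∀ ω₂, Integrable (fun ω₁ => ShatXy ω₁ ω₂ j) μ₁ := by
    intro ω₂
    have heq : (fun ω₁ => ShatXy ω₁ ω₂ j) = fun ω₁ =>
        (n : ℝ)⁻¹ * ∑ i, Xt i j ω₁ * Yt i ω₁ ω₂ := funext fun ω₁ => hShatXy ω₁ ω₂ j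
    rw [heq]
    exact (integrable_finset_sum _ (fun i _ => (iYt i ω₂).bdd_mul (iXt i j).1
      (Filter.Eventually.of_forall (quant_bdd (hXt i j))))).const_mul _
  have inner : ∀ ω₂, ∫ ω₁, ((∑ k, Shat ω₁ j k * βs k) - ShatXy ω₁ ω₂ j) ∂μ₁ =
      (∑ k, ((n : ℝ)⁻¹ * ∑ i, X i j * X i k) * βs k) -
        (n : ℝ)⁻¹ * ∑ i, X i j * Y i ω₂ := by
    intro ω₂
    rw [integral_sub (integrable_finset_sum _ (fun k _ => (iShat k).mul_const _)) (iShatXy ω₂),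
      integral_finset_sum _ (fun k _ => (iShat k).mul_const _), part2 ω₂ j]
    congr 1
    refine Finset.sum_congr rfl fun k _ => ?_
    rw [integral_mul_const, part1 j k]
  simp only [inner]
  -- integrability and mean of Y over ω₂
  have iY : ∀ i, Integrable (Y i) μ₂ := by
    intro i
    have heq : Y i = fun ω₂ => (∑ k, X i k * βs k) + σ * ε i ω₂ := funext (hY i)
    rw [heq]
    exact (integrable_const _).add ((hintε i).const_mul σ)
  have EY : ∀ i, ∫ ω₂, Y i ω₂ ∂μ₂ = ∑ k, X i k * βs k := by
    intro i
    have heq : Y i = fun ω₂ => (∑ k, X i k * βs k) + σ * ε i ω₂ := funext (hY i)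
    rw [heq, integral_add (integrable_const _) ((hintε i).const_mul σ),
      MeasureTheory.integral_const_mul, hmeanε, integral_const]
    simp
  rw [integral_sub (integrable_const _)
    ((integrable_finset_sum _ (fun i _ => (iY i).const_mul (X i j))).const_mul _),
    integral_const, MeasureTheory.integral_const_mul,
    integral_finset_sum _ (fun i _ => (iY i).const_mul (X i j))]
  simp only [MeasureTheory.integral_const_mul, EY]
  rw [sub_eq_zero]
  simp only [probReal_univ, measure_univ, ENNReal.toReal_one, one_smul]
  simp only [Finset.sum_mul, Finset.mul_sum, mul_assoc]
  rw [Finset.sum_comm]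
end

section
/- With Γ_a = E[(X̃_1X̃_1ᵀ + Δ_1)β*β*ᵀ(X̃_1X̃_1ᵀ + Δ_1)] and Γ_b = E[(X̃_1X̃_1ᵀ + Δ_1)β*X̃_1ᵀỸ_1] + E[X̃_1Ỹ_1β*ᵀ(X̃_1X̃_1ᵀ + Δ_1)], where Δ_1 = diag(X̃²_{11} − R², …, X̃²_{1d} − R²), the entrywise maximum bound ‖Γ_a − Γ_b‖_∞ ≤ 3R⁴‖β*‖₁² holds; in particular ‖Γ_a‖_∞ ≤ R⁴‖β*‖₁² and ‖Γ_b‖_∞ ≤ 2R⁴‖β*‖₁². -/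
open MeasureTheory ProbabilityTheory


lemma unif_quant_mean {Ω : Type*} [MeasurableSpace Ω] {μ : Measure Ω}
    {ζ : Ω → ℝ} (hmζ : Measurable ζ) {L : ℝ} (hL : 0 < L)
    (hunif : pdf.IsUniform ζ (Set.Ioo (-L) L) μ volume) {y : ℝ} (hy : |y| ≤ L) :
    ∫ ω, (if 0 ≤ y + ζ ω then L else -L) ∂μ = y := by
  obtain ⟨hy1, hy2⟩ := abs_le.mp hy
  have hvol : volume (Set.Ioo (-L) L) = ENNReal.ofReal (2 * L) := by
    rw [Real.volume_Ioo]; ring_nf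
  have h0 : volume (Set.Ioo (-L) L) ≠ 0 := by
    rw [hvol]; simp only [ne_eq, ENNReal.ofReal_eq_zero, not_le]; linarith
  have hT : volume (Set.Ioo (-L) L) ≠ ⊤ := by rw [hvol]; exact ENNReal.ofReal_ne_top
  haveI : IsProbabilityMeasure μ := hunif.isProbabilityMeasure h0 hT
  have hinter : volume (Set.Ioo (-L) L ∩ Set.Ici (-y)) = ENNReal.ofReal (L + y) := by
    rcases lt_or_eq_of_le (neg_le_neg hy2) with h | h
    · have : Set.Ioo (-L) L ∩ Set.Ici (-y) = Set.Ico (-y) L := by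
        ext z
        simp only [Set.mem_inter_iff, Set.mem_Ioo, Set.mem_Ici, Set.mem_Ico]
        constructor
        · rintro ⟨⟨_, hz2⟩, hz3⟩; exact ⟨hz3, hz2⟩
        · rintro ⟨hz1, hz2⟩; exact ⟨⟨lt_of_lt_of_le h hz1, hz2⟩, hz1⟩
      rw [this, Real.volume_Ico]; congr 1; ring
    · have hyL : y = L := by linarith
      have : Set.Ioo (-L) L ∩ Set.Ici (-y) = Set.Ioo (-L) L := by
        apply Set.inter_eq_self_of_subset_left
        intro z hz
        simp only [Set.mem_Ici]
        exact (h ▸ hz.1).le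
      rw [this, Real.volume_Ioo, hyL]; congr 1; ring
  have hpre : μ (ζ ⁻¹' Set.Ici (-y)) = ENNReal.ofReal (L + y) / ENNReal.ofReal (2 * L) := by
    rw [hunif.measure_preimage h0 hT measurableSet_Ici, hinter, hvol]
  have heq : ∀ ω, (if 0 ≤ y + ζ ω then L else -L)
      = Set.indicator (ζ ⁻¹' Set.Ici (-y)) (fun _ => 2 * L) ω + (-L) := by
    intro ω
    by_cases h : 0 ≤ y + ζ ω
    · rw [if_pos h, Set.indicator_of_mem (by simp only [Set.mem_preimage, Set.mem_Ici]; linarith)]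
      ring
    · rw [if_neg h, Set.indicator_of_notMem (by simp only [Set.mem_preimage, Set.mem_Ici]; intro hc; exact h (by linarith))]
      ring
  rw [integral_congr_ae (Filter.Eventually.of_forall heq),
    integral_add ((integrable_const (2 * L)).indicator (hmζ measurableSet_Ici)) (integrable_const _),
    integral_indicator_const _ (hmζ measurableSet_Ici), integral_const, measureReal_def, measureReal_def, hpre, measure_univ]
  rw [ENNReal.toReal_div, ENNReal.toReal_ofReal (by linarith), ENNReal.toReal_ofReal (by linarith)]
  simp only [smul_eq_mul, ENNReal.toReal_one, one_mul]
  field_simp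
  ring


lemma indepFun_pair_of {Ω α' β' γ' : Type*} [MeasurableSpace Ω] [MeasurableSpace α']
    [MeasurableSpace β'] [MeasurableSpace γ'] {μ : Measure Ω} [IsProbabilityMeasure μ]
    {A : Ω → α'} {B : Ω → β'} {C : Ω → γ'}
    (hA : Measurable A) (hB : Measurable B) (hC : Measurable C)
    (h1 : IndepFun A B μ) (h2 : IndepFun (fun ω => (A ω, B ω)) C μ) :
    IndepFun (fun ω => (A ω, C ω)) B μ := by
  have h1' := (indepFun_iff_measure_inter_preimage_eq_mul.mp h1)
  have h2' := (indepFun_iff_measure_inter_preimage_eq_mul.mp h2)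
  have e2 : ∀ (v : Set α') (w' : Set β'),
      (fun ω => (A ω, B ω)) ⁻¹' (v ×ˢ w') = A ⁻¹' v ∩ B ⁻¹' w' := fun v w' => Set.mk_preimage_prod A B
  have key : ∀ (s : Set α') (t : Set γ') (u : Set β'), MeasurableSet s → MeasurableSet t →
      MeasurableSet u →
      μ ((fun ω => (A ω, C ω)) ⁻¹' (s ×ˢ t) ∩ B ⁻¹' u)
        = μ ((fun ω => (A ω, C ω)) ⁻¹' (s ×ˢ t)) * μ (B ⁻¹' u) := by
    intro s t u hs ht hu
    have e1 : (fun ω => (A ω, C ω)) ⁻¹' (s ×ˢ t) = A ⁻¹' s ∩ C ⁻¹' t := Set.mk_preimage_prod A C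
    have hAC : μ (A ⁻¹' s ∩ C ⁻¹' t) = μ (A ⁻¹' s) * μ (C ⁻¹' t) := by
      have := h2' (s ×ˢ Set.univ) t (hs.prod MeasurableSet.univ) ht
      rw [e2] at this
      simpa using this
    have hstep : μ ((A ⁻¹' s ∩ B ⁻¹' u) ∩ C ⁻¹' t) = μ (A ⁻¹' s ∩ B ⁻¹' u) * μ (C ⁻¹' t) := by
      have := h2' (s ×ˢ u) t (hs.prod hu) ht
      rwa [e2] at this
    have hAB : μ (A ⁻¹' s ∩ B ⁻¹' u) = μ (A ⁻¹' s) * μ (B ⁻¹' u) := h1' s u hs hu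
    rw [e1]
    calc μ (A ⁻¹' s ∩ C ⁻¹' t ∩ B ⁻¹' u)
        = μ ((A ⁻¹' s ∩ B ⁻¹' u) ∩ C ⁻¹' t) := by
          congr 1; ext ω; simp only [Set.mem_inter_iff]; tauto
      _ = μ (A ⁻¹' s) * μ (B ⁻¹' u) * μ (C ⁻¹' t) := by rw [hstep, hAB]
      _ = μ (A ⁻¹' s) * μ (C ⁻¹' t) * μ (B ⁻¹' u) := by ring
      _ = μ (A ⁻¹' s ∩ C ⁻¹' t) * μ (B ⁻¹' u) := by rw [hAC]
  -- π-system argument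
  set R : Set (Set (α' × γ')) :=
    Set.image2 (· ×ˢ ·) { s : Set α' | MeasurableSet s } { t : Set γ' | MeasurableSet t } with hR
  set p1 : Set (Set Ω) := Set.preimage (fun ω => (A ω, C ω)) '' R with hp1def
  set p2 : Set (Set Ω) := { S | ∃ u, MeasurableSet u ∧ B ⁻¹' u = S } with hp2def
  have hpm1 : MeasurableSpace.comap (fun ω => (A ω, C ω)) Prod.instMeasurableSpace
      = MeasurableSpace.generateFrom p1 := by
    rw [hp1def, hR, ← generateFrom_prod, MeasurableSpace.comap_generateFrom]
  have hpm2 : MeasurableSpace.comap B inferInstance = MeasurableSpace.generateFrom p2 :=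
    MeasurableSpace.comap_eq_generateFrom _ _
  have hp1 : IsPiSystem p1 := by
    have := isPiSystem_prod.comap (α := Ω) (fun ω => (A ω, C ω))
    exact this
  have hp2 : IsPiSystem p2 := by
    have := (MeasurableSpace.isPiSystem_measurableSet (α := β')).comap (α := Ω) B
    exact this
  have hIS : IndepSets p1 p2 μ := by
    rintro S1 S2 ⟨T, hT, rfl⟩ ⟨u, hu, rfl⟩
    rw [hR, Set.mem_image2] at hT
    obtain ⟨s, hs, t, ht, rfl⟩ := hT
    apply Filter.Eventually.of_forall
    intro _
    simp only [Kernel.const_apply]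
    exact key s t u hs ht hu
  exact IndepSets.indep (hA.prodMk hC).comap_le hB.comap_le hp1 hp2 hpm1 hpm2 hIS

lemma fub_quant {Ω α' : Type*} [MeasurableSpace Ω] [MeasurableSpace α'] {μ : Measure Ω}
    [IsProbabilityMeasure μ] {L : ℝ} (hL : 0 < L)
    {W : Ω → α'} {ζ : Ω → ℝ} (hW : Measurable W) (hζ : Measurable ζ)
    (hInd : IndepFun W ζ μ)
    (hunif : pdf.IsUniform ζ (Set.Ioo (-L) L) μ volume)
    (g y : α' → ℝ) (hg : Measurable g) (hy : Measurable y)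
    (C : ℝ) (hgb : ∀ w, |g w| ≤ C)
    (hyb : ∀ ω, |y (W ω)| ≤ L) :
    ∫ ω, g (W ω) * (if 0 ≤ y (W ω) + ζ ω then L else -L) ∂μ
      = ∫ ω, g (W ω) * y (W ω) ∂μ := by
  set ν := μ.map W with hν
  set κ := μ.map ζ with hκ
  haveI : IsProbabilityMeasure ν := Measure.isProbabilityMeasure_map hW.aemeasurable
  haveI : IsProbabilityMeasure κ := Measure.isProbabilityMeasure_map hζ.aemeasurable
  have hκunif : pdf.IsUniform (id : ℝ → ℝ) (Set.Ioo (-L) L) κ volume := by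
    show Measure.map id κ = _
    rw [Measure.map_id]
    exact hunif
  have hmean : ∀ b : ℝ, |b| ≤ L → ∫ z, (if 0 ≤ b + z then L else -L) ∂κ = b := by
    intro b hb
    simpa using unif_quant_mean measurable_id hL hκunif hb
  have hmap : μ.map (fun ω => (W ω, ζ ω)) = ν.prod κ :=
    (indepFun_iff_map_prod_eq_prod_map_map hW.aemeasurable hζ.aemeasurable).mp hInd
  set F : α' × ℝ → ℝ := fun p => g p.1 * (if 0 ≤ y p.1 + p.2 then L else -L) with hF
  have hFm : Measurable F := by
    apply (hg.comp measurable_fst).mul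
    exact Measurable.ite
      (measurableSet_le measurable_const ((hy.comp measurable_fst).add measurable_snd))
      measurable_const measurable_const
  have hFi : Integrable F (ν.prod κ) := by
    refine Integrable.mono' (integrable_const (C * L)) hFm.aestronglyMeasurable
      (Filter.Eventually.of_forall fun p => ?_)
    rw [Real.norm_eq_abs, hF, abs_mul]
    have h1 : |if 0 ≤ y p.1 + p.2 then L else -L| ≤ L := by
      split_ifs <;> simp [abs_of_pos hL, hL.le]
    exact mul_le_mul (hgb p.1) h1 (abs_nonneg _) ((abs_nonneg _).trans (hgb p.1))
  have h1 : ∫ ω, g (W ω) * (if 0 ≤ y (W ω) + ζ ω then L else -L) ∂μ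
      = ∫ p, F p ∂(ν.prod κ) := by
    rw [← hmap]
    exact (integral_map (hW.aemeasurable.prodMk hζ.aemeasurable)
      hFm.aestronglyMeasurable).symm
  rw [h1, integral_prod _ hFi]
  have h2 : ∀ᵐ w ∂ν, |y w| ≤ L := by
    rw [hν]
    exact (ae_map_iff hW.aemeasurable (measurableSet_le hy.abs measurable_const)).mpr
      (Filter.Eventually.of_forall hyb)
  have h3 : (fun w => ∫ z, F (w, z) ∂κ) =ᵐ[ν] fun w => g w * y w := by
    filter_upwards [h2] with w hw
    have : ∫ z, F (w, z) ∂κ = g w * ∫ z, (if 0 ≤ y w + z then L else -L) ∂κ := by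
      simp only [hF]
      exact integral_const_mul _ _
    rw [this, hmean (y w) hw]
  rw [integral_congr_ae h3]
  exact integral_map hW.aemeasurable ((hg.mul hy)).aestronglyMeasurable

set_option maxHeartbeats 1000000 in
/-- with `Γ_a = E[(X̃₁X̃₁ᵀ + Δ₁)β*β*ᵀ(X̃₁X̃₁ᵀ + Δ₁)]` and
`Γ_b = E[(X̃₁X̃₁ᵀ + Δ₁)β*X̃₁ᵀỸ₁] + E[X̃₁Ỹ₁β*ᵀ(X̃₁X̃₁ᵀ + Δ₁)]`, one has
`‖Γ_a − Γ_b‖_∞ ≤ 3R⁴‖β*‖₁²`, and in particular `‖Γ_a‖_∞ ≤ R⁴‖β*‖₁²`,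
`‖Γ_b‖_∞ ≤ 2R⁴‖β*‖₁²`.  Quantization is modelled through independent uniform dithers. -/
theorem stmt_6 {Ω : Type*} [MeasurableSpace Ω] (μ : Measure Ω) [IsProbabilityMeasure μ]
    (d : ℕ) (R L σ : ℝ) (hR : 0 < R) (hL : 0 < L)
    (X : Ω → Fin d → ℝ) (ε : Ω → ℝ) (βs : Fin d → ℝ)
    (hmX : Measurable X) (hmε : Measurable ε)
    (hXbdd : ∀ ω j, |X ω j| ≤ R)
    (Y : Ω → ℝ) (hY : ∀ ω, Y ω = (∑ j, X ω j * βs j) + σ * ε ω)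
    (hYbdd : ∀ ω, |Y ω| ≤ L)
    (hmeanε : ∫ ω, ε ω ∂μ = 0) (hεvar : ∫ ω, ε ω ^ 2 ∂μ = 1)
    (hXε : IndepFun X ε μ)
    -- dither variables: mutually independent, independent of the data, uniform
    (ξ η : Fin d → Ω → ℝ) (ζ : Ω → ℝ)
    (hmξ : ∀ j, Measurable (ξ j)) (hmη : ∀ j, Measurable (η j)) (hmζ : Measurable ζ)
    (hunifξ : ∀ j, pdf.IsUniform (ξ j) (Set.Ioo (-R) R) μ volume)
    (hunifη : ∀ j, pdf.IsUniform (η j) (Set.Ioo (-(R ^ 2 / 2)) (R ^ 2 / 2)) μ volume)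
    (hunifζ : pdf.IsUniform ζ (Set.Ioo (-L) L) μ volume)
    (hdithind : iIndepFun
      (fun k : Fin d ⊕ Fin d ⊕ Unit => Sum.elim ξ (Sum.elim η (fun _ => ζ)) k) μ)
    (hdithdata : IndepFun (fun ω => (X ω, ε ω))
      (fun ω => ((fun j => ξ j ω), (fun j => η j ω), ζ ω)) μ)
    -- the 1-bit dithered quantized data
    (Xt Xsq : Fin d → Ω → ℝ) (Yt : Ω → ℝ)
    (hXt : ∀ j ω, Xt j ω = if 0 ≤ X ω j + ξ j ω then R else -R)
    (hXsq : ∀ j ω, Xsq j ω = if R ^ 2 / 2 ≤ (X ω j) ^ 2 + η j ω then R ^ 2 else 0)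
    (hYt : ∀ ω, Yt ω = if 0 ≤ Y ω + ζ ω then L else -L)
    -- (X̃₁X̃₁ᵀ + Δ₁)β*
    (Aβ : Ω → Fin d → ℝ)
    (hAβ : ∀ ω j, Aβ ω j =
      ∑ k, (Xt j ω * Xt k ω + if j = k then Xsq j ω - R ^ 2 else 0) * βs k)
    (Γa Γb : Fin d → Fin d → ℝ)
    (hΓa : ∀ j k, Γa j k = ∫ ω, Aβ ω j * Aβ ω k ∂μ)
    (hΓb : ∀ j k, Γb j k =
      (∫ ω, Aβ ω j * (Xt k ω * Yt ω) ∂μ) + ∫ ω, (Xt j ω * Yt ω) * Aβ ω k ∂μ) :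
    ∀ j k, |Γa j k| ≤ R ^ 4 * (∑ m, |βs m|) ^ 2 ∧
      |Γb j k| ≤ 2 * R ^ 4 * (∑ m, |βs m|) ^ 2 ∧
      |Γa j k - Γb j k| ≤ 3 * R ^ 4 * (∑ m, |βs m|) ^ 2 := by
  classical
  have hB0 : (0:ℝ) ≤ ∑ m, |βs m| := Finset.sum_nonneg fun m _ => abs_nonneg _
  set B := ∑ m, |βs m| with hBdef
  -- measurability
  have hmXj : ∀ j, Measurable fun ω => X ω j := fun j => (measurable_pi_apply j).comp hmX
  have hmXt : ∀ j, Measurable (Xt j) := by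
    intro j
    have h : Xt j = fun ω => if 0 ≤ X ω j + ξ j ω then R else -R := funext fun ω => hXt j ω
    rw [h]
    exact Measurable.ite (measurableSet_le measurable_const ((hmXj j).add (hmξ j)))
      measurable_const measurable_const
  have hmXsq : ∀ j, Measurable (Xsq j) := by
    intro j
    have h : Xsq j = fun ω => if R ^ 2 / 2 ≤ X ω j ^ 2 + η j ω then R ^ 2 else 0 :=
      funext fun ω => hXsq j ω
    rw [h]
    exact Measurable.ite (measurableSet_le measurable_const (((hmXj j).pow_const 2).add (hmη j)))
      measurable_const measurable_const
  have hmAβ : ∀ j, Measurable fun ω => Aβ ω j := by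
    intro j
    have h : (fun ω => Aβ ω j)
        = fun ω => ∑ k, (Xt j ω * Xt k ω + if j = k then Xsq j ω - R ^ 2 else 0) * βs k :=
      funext fun ω => hAβ ω j
    rw [h]
    refine Finset.measurable_sum _ fun k _ => Measurable.mul ?_ measurable_const
    refine ((hmXt j).mul (hmXt k)).add ?_
    split_ifs
    · exact (hmXsq j).sub measurable_const
    · exact measurable_const
  -- pointwise bounds
  have hXtabs : ∀ j ω, |Xt j ω| = R := by
    intro j ω
    rw [hXt]
    split_ifs
    · exact abs_of_pos hR
    · rw [abs_neg]; exact abs_of_pos hR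
  have hEnt : ∀ j k ω, |Xt j ω * Xt k ω + (if j = k then Xsq j ω - R ^ 2 else 0)| ≤ R ^ 2 := by
    intro j k ω
    rcases eq_or_ne j k with rfl | hjk
    · have hsq : Xt j ω * Xt j ω = R ^ 2 := by rw [hXt]; split_ifs <;> ring
      rw [if_pos rfl, hsq, show R ^ 2 + (Xsq j ω - R ^ 2) = Xsq j ω by ring, hXsq]
      split_ifs
      · rw [abs_of_nonneg (by positivity)]
      · rw [abs_zero]; positivity
    · rw [if_neg hjk, add_zero, abs_mul, hXtabs, hXtabs, ← sq]
  have hAb : ∀ ω j, |Aβ ω j| ≤ R ^ 2 * B := by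
    intro ω j
    rw [hAβ]
    calc |∑ k, (Xt j ω * Xt k ω + if j = k then Xsq j ω - R ^ 2 else 0) * βs k|
        ≤ ∑ k, |(Xt j ω * Xt k ω + if j = k then Xsq j ω - R ^ 2 else 0) * βs k| :=
          Finset.abs_sum_le_sum_abs _ _
      _ ≤ ∑ k, R ^ 2 * |βs k| := Finset.sum_le_sum fun k _ => by
          rw [abs_mul]; exact mul_le_mul_of_nonneg_right (hEnt j k ω) (abs_nonneg _)
      _ = R ^ 2 * B := by rw [← Finset.mul_sum]
  have hXsum : ∀ ω, |∑ m, X ω m * βs m| ≤ R * B := by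
    intro ω
    calc |∑ m, X ω m * βs m| ≤ ∑ m, |X ω m * βs m| := Finset.abs_sum_le_sum_abs _ _
      _ ≤ ∑ m, R * |βs m| := Finset.sum_le_sum fun m _ => by
          rw [abs_mul]; exact mul_le_mul_of_nonneg_right (hXbdd ω m) (abs_nonneg _)
      _ = R * B := by rw [← Finset.mul_sum]
  -- integral bound helper
  have habs : ∀ (f : Ω → ℝ) (C : ℝ), (∀ ω, |f ω| ≤ C) → |∫ ω, f ω ∂μ| ≤ C := by
    intro f C hf
    have h := norm_integral_le_of_norm_le_const (μ := μ) (f := f) (C := C)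
      (Filter.Eventually.of_forall fun ω => by rw [Real.norm_eq_abs]; exact hf ω)
    rwa [Real.norm_eq_abs, probReal_univ, mul_one] at h
  -- independence setup
  have hmξp : Measurable fun ω => fun m => ξ m ω := measurable_pi_lambda _ hmξ
  have hmηp : Measurable fun ω => fun m => η m ω := measurable_pi_lambda _ hmη
  have hmXε : Measurable fun ω => (X ω, ε ω) := hmX.prodMk hmε
  have hmD : Measurable fun ω => ((fun m => ξ m ω), (fun m => η m ω), ζ ω) :=
    hmξp.prodMk (hmηp.prodMk hmζ)
  have hξηζ : IndepFun (fun ω => ((fun m => ξ m ω), (fun m => η m ω))) ζ μ := by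
    have hfm : ∀ i : Fin d ⊕ Fin d ⊕ Unit,
        Measurable (Sum.elim ξ (Sum.elim η fun _ => ζ) i) := by
      rintro (j | j | u)
      · exact hmξ j
      · exact hmη j
      · exact hmζ
    have hmemL : ∀ m : Fin d, (Sum.inl m : Fin d ⊕ Fin d ⊕ Unit)
        ∈ (Finset.univ \ {Sum.inr (Sum.inr ())} : Finset (Fin d ⊕ Fin d ⊕ Unit)) := by
      intro m; simp
    have hmemM : ∀ m : Fin d, (Sum.inr (Sum.inl m) : Fin d ⊕ Fin d ⊕ Unit)
        ∈ (Finset.univ \ {Sum.inr (Sum.inr ())} : Finset (Fin d ⊕ Fin d ⊕ Unit)) := by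
      intro m; simp
    have hmemR : (Sum.inr (Sum.inr ()) : Fin d ⊕ Fin d ⊕ Unit)
        ∈ ({Sum.inr (Sum.inr ())} : Finset (Fin d ⊕ Fin d ⊕ Unit)) := by simp
    have h := hdithind.indepFun_finset (Finset.univ \ {Sum.inr (Sum.inr ())})
      {Sum.inr (Sum.inr ())} Finset.sdiff_disjoint hfm
    have hφ : Measurable fun v : {x // x ∈ (Finset.univ \ {Sum.inr (Sum.inr ())} :
          Finset (Fin d ⊕ Fin d ⊕ Unit))} → ℝ =>
        ((fun m : Fin d => v ⟨Sum.inl m, hmemL m⟩),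
          (fun m : Fin d => v ⟨Sum.inr (Sum.inl m), hmemM m⟩)) :=
      (measurable_pi_lambda _ fun m => measurable_pi_apply _).prodMk
        (measurable_pi_lambda _ fun m => measurable_pi_apply _)
    have hψ : Measurable fun v : {x // x ∈ ({Sum.inr (Sum.inr ())} :
          Finset (Fin d ⊕ Fin d ⊕ Unit))} → ℝ => v ⟨Sum.inr (Sum.inr ()), hmemR⟩ :=
      measurable_pi_apply _
    exact h.comp hφ hψ
  have hreshape : IndepFun (fun ω => (((fun m => ξ m ω), (fun m => η m ω)), ζ ω))
      (fun ω => (X ω, ε ω)) μ := by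
    have h := hdithdata.symm
    have hψ : Measurable fun p : (Fin d → ℝ) × ((Fin d → ℝ) × ℝ) => ((p.1, p.2.1), p.2.2) :=
      (measurable_fst.prodMk (measurable_fst.comp measurable_snd)).prodMk
        (measurable_snd.comp measurable_snd)
    exact h.comp hψ measurable_id
  have hWζ : IndepFun (fun ω => ((X ω, ε ω), ((fun m => ξ m ω), (fun m => η m ω)))) ζ μ := by
    have h := indepFun_pair_of (hmξp.prodMk hmηp) hmζ hmXε hξηζ hreshape
    exact h.comp measurable_swap measurable_id
  have hUε : IndepFun (fun ω => (X ω, ((fun m => ξ m ω), (fun m => η m ω), ζ ω))) ε μ :=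
    indepFun_pair_of hmX hmε hmD hXε hdithdata
  -- integrability of ε
  have hsq_int : Integrable (fun ω => ε ω ^ 2) μ := by
    by_contra h
    rw [integral_undef h] at hεvar
    norm_num at hεvar
  have hεint : Integrable ε μ :=
    ((memLp_two_iff_integrable_sq hmε.aestronglyMeasurable).mpr hsq_int).integrable (by norm_num)
  -- the key identity
  have key : ∀ j k : Fin d, ∫ ω, Aβ ω j * (Xt k ω * Yt ω) ∂μ
      = ∫ ω, (Aβ ω j * Xt k ω) * (∑ m, X ω m * βs m) ∂μ := by
    intro j k
    set g : ((Fin d → ℝ) × ℝ) × ((Fin d → ℝ) × (Fin d → ℝ)) → ℝ := fun w =>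
      (∑ k', ((if 0 ≤ w.1.1 j + w.2.1 j then R else -R) *
          (if 0 ≤ w.1.1 k' + w.2.1 k' then R else -R)
        + if j = k' then (if R ^ 2 / 2 ≤ w.1.1 j ^ 2 + w.2.2 j then R ^ 2 else 0) - R ^ 2 else 0)
        * βs k') * (if 0 ≤ w.1.1 k + w.2.1 k then R else -R) with hgdef
    set y : ((Fin d → ℝ) × ℝ) × ((Fin d → ℝ) × (Fin d → ℝ)) → ℝ := fun w =>
      (∑ m, w.1.1 m * βs m) + σ * w.1.2 with hydef
    set W : Ω → ((Fin d → ℝ) × ℝ) × ((Fin d → ℝ) × (Fin d → ℝ)) := fun ω =>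
      ((X ω, ε ω), ((fun m => ξ m ω), (fun m => η m ω))) with hWdef
    have hmW : Measurable W := hmXε.prodMk (hmξp.prodMk hmηp)
    have hq : ∀ m : Fin d, Measurable fun w : ((Fin d → ℝ) × ℝ) × ((Fin d → ℝ) × (Fin d → ℝ)) =>
        (if 0 ≤ w.1.1 m + w.2.1 m then R else -R) := by
      intro m
      refine Measurable.ite (measurableSet_le measurable_const ?_)
        measurable_const measurable_const
      exact ((measurable_pi_apply m).comp (measurable_fst.comp measurable_fst)).add
        ((measurable_pi_apply m).comp (measurable_fst.comp measurable_snd))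
    have hqs : Measurable fun w : ((Fin d → ℝ) × ℝ) × ((Fin d → ℝ) × (Fin d → ℝ)) =>
        (if R ^ 2 / 2 ≤ w.1.1 j ^ 2 + w.2.2 j then R ^ 2 else 0) := by
      refine Measurable.ite (measurableSet_le measurable_const ?_)
        measurable_const measurable_const
      exact (((measurable_pi_apply j).comp (measurable_fst.comp measurable_fst)).pow_const 2).add
        ((measurable_pi_apply j).comp (measurable_snd.comp measurable_snd))
    have hmg : Measurable g := by
      rw [hgdef]
      refine Measurable.mul ?_ (hq k)
      refine Finset.measurable_sum _ fun k' _ => Measurable.mul ?_ measurable_const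
      refine ((hq j).mul (hq k')).add ?_
      split_ifs
      · exact hqs.sub measurable_const
      · exact measurable_const
    have hmy : Measurable y := by
      rw [hydef]
      exact (Finset.measurable_sum _ fun m _ =>
        ((measurable_pi_apply m).comp (measurable_fst.comp measurable_fst)).mul
          measurable_const).add (measurable_const.mul (measurable_snd.comp measurable_fst))
    have hiteR : ∀ (c : Prop) (inst : Decidable c), |(if c then R else -R)| ≤ R := by
      intro c inst
      split_ifs
      · exact le_of_eq (abs_of_pos hR)
      · rw [abs_neg]; exact le_of_eq (abs_of_pos hR)
    have hgb : ∀ w, |g w| ≤ (2 * R ^ 2 * B) * R := by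
      intro w
      rw [hgdef]
      simp only
      rw [abs_mul]
      have hsumb : |∑ k', ((if 0 ≤ w.1.1 j + w.2.1 j then R else -R) *
          (if 0 ≤ w.1.1 k' + w.2.1 k' then R else -R)
          + if j = k' then (if R ^ 2 / 2 ≤ w.1.1 j ^ 2 + w.2.2 j then R ^ 2 else 0) - R ^ 2 else 0)
          * βs k'| ≤ 2 * R ^ 2 * B := by
        calc _ ≤ ∑ k', |((if 0 ≤ w.1.1 j + w.2.1 j then R else -R) *
            (if 0 ≤ w.1.1 k' + w.2.1 k' then R else -R)
            + if j = k' then (if R ^ 2 / 2 ≤ w.1.1 j ^ 2 + w.2.2 j then R ^ 2 else 0) - R ^ 2 else 0)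
            * βs k'| := Finset.abs_sum_le_sum_abs _ _
          _ ≤ ∑ k', (2 * R ^ 2) * |βs k'| := by
            refine Finset.sum_le_sum fun k' _ => ?_
            rw [abs_mul]
            refine mul_le_mul_of_nonneg_right ?_ (abs_nonneg _)
            refine (abs_add_le _ _).trans ?_
            have h1 : |(if 0 ≤ w.1.1 j + w.2.1 j then R else -R) *
                (if 0 ≤ w.1.1 k' + w.2.1 k' then R else -R)| ≤ R ^ 2 := by
              rw [abs_mul, sq]
              exact mul_le_mul (hiteR _ _) (hiteR _ _) (abs_nonneg _) hR.le
            have h2 : |(if j = k' then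
                (if R ^ 2 / 2 ≤ w.1.1 j ^ 2 + w.2.2 j then R ^ 2 else 0) - R ^ 2 else 0)|
                ≤ R ^ 2 := by
              split_ifs
              · rw [sub_self, abs_zero]; positivity
              · rw [zero_sub, abs_neg, abs_of_nonneg (sq_nonneg R)]
              · rw [abs_zero]; positivity
            linarith
          _ = 2 * R ^ 2 * B := by rw [← Finset.mul_sum]
      exact mul_le_mul hsumb (hiteR _ _) (abs_nonneg _) (by positivity)
    have hgW : ∀ ω, g (W ω) = Aβ ω j * Xt k ω := by
      intro ω
      simp only [hgdef, hWdef]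
      rw [hAβ]
      simp only [hXt, hXsq]
    have hyW : ∀ ω, y (W ω) = Y ω := by
      intro ω
      simp only [hydef, hWdef]
      rw [hY]
    have step1 : ∫ ω, Aβ ω j * (Xt k ω * Yt ω) ∂μ
        = ∫ ω, g (W ω) * (if 0 ≤ y (W ω) + ζ ω then L else -L) ∂μ := by
      refine integral_congr_ae (Filter.Eventually.of_forall fun ω => ?_)
      show Aβ ω j * (Xt k ω * Yt ω) = g (W ω) * (if 0 ≤ y (W ω) + ζ ω then L else -L)
      rw [hgW, hyW, hYt ω]
      ring
    have step2 := fub_quant hL hmW hmζ hWζ hunifζ g y hmg hmy _ hgb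
      (fun ω => by rw [hyW]; exact hYbdd ω)
    have step3 : ∫ ω, g (W ω) * y (W ω) ∂μ = ∫ ω, (Aβ ω j * Xt k ω) * Y ω ∂μ := by
      refine integral_congr_ae (Filter.Eventually.of_forall fun ω => ?_)
      show g (W ω) * y (W ω) = (Aβ ω j * Xt k ω) * Y ω
      rw [hgW, hyW]
    -- eliminate ε
    have hq' : ∀ m : Fin d, Measurable fun p : (Fin d → ℝ) × ((Fin d → ℝ) × (Fin d → ℝ) × ℝ) =>
        (if 0 ≤ p.1 m + p.2.1 m then R else -R) := by
      intro m
      refine Measurable.ite (measurableSet_le measurable_const ?_)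
        measurable_const measurable_const
      exact ((measurable_pi_apply m).comp measurable_fst).add
        ((measurable_pi_apply m).comp (measurable_fst.comp measurable_snd))
    have hqs' : Measurable fun p : (Fin d → ℝ) × ((Fin d → ℝ) × (Fin d → ℝ) × ℝ) =>
        (if R ^ 2 / 2 ≤ p.1 j ^ 2 + p.2.2.1 j then R ^ 2 else 0) := by
      refine Measurable.ite (measurableSet_le measurable_const ?_)
        measurable_const measurable_const
      exact (((measurable_pi_apply j).comp measurable_fst).pow_const 2).add
        ((measurable_pi_apply j).comp (measurable_fst.comp (measurable_snd.comp
          measurable_snd)))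
    have hφm : Measurable fun p : (Fin d → ℝ) × ((Fin d → ℝ) × (Fin d → ℝ) × ℝ) =>
        (∑ k', ((if 0 ≤ p.1 j + p.2.1 j then R else -R) *
          (if 0 ≤ p.1 k' + p.2.1 k' then R else -R)
          + if j = k' then (if R ^ 2 / 2 ≤ p.1 j ^ 2 + p.2.2.1 j then R ^ 2 else 0) - R ^ 2 else 0)
          * βs k') * (if 0 ≤ p.1 k + p.2.1 k then R else -R) := by
      refine Measurable.mul ?_ (hq' k)
      refine Finset.measurable_sum _ fun k' _ => Measurable.mul ?_ measurable_const
      refine ((hq' j).mul (hq' k')).add ?_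
      split_ifs
      · exact hqs'.sub measurable_const
      · exact measurable_const
    have hHε : IndepFun (fun ω => Aβ ω j * Xt k ω) ε μ := by
      have h := hUε.comp hφm measurable_id
      refine h.congr ?_ ?_
      · refine Filter.Eventually.of_forall fun ω => ?_
        simp only [Function.comp_apply]
        rw [hAβ]
        simp only [hXt, hXsq]
      · exact Filter.Eventually.of_forall fun ω => rfl
    have hεmul : ∫ ω, (Aβ ω j * Xt k ω) * ε ω ∂μ = 0 := by
      have h := hHε.integral_mul_eq_mul_integral ((hmAβ j).mul (hmXt k)).aestronglyMeasurable
        hmε.aestronglyMeasurable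
      simp only [Pi.mul_apply] at h
      rw [h, hmeanε, mul_zero]
    have int1 : Integrable (fun ω => (Aβ ω j * Xt k ω) * (∑ m, X ω m * βs m)) μ := by
      refine Integrable.mono' (integrable_const ((R ^ 2 * B * R) * (R * B)))
        (((hmAβ j).mul (hmXt k)).mul
          (Finset.measurable_sum _ fun m _ =>
            (hmXj m).mul measurable_const)).aestronglyMeasurable
        (Filter.Eventually.of_forall fun ω => ?_)
      rw [Real.norm_eq_abs, abs_mul, abs_mul]
      have h1 : |Aβ ω j| * |Xt k ω| ≤ R ^ 2 * B * R := by
        rw [hXtabs]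
        exact mul_le_mul_of_nonneg_right (hAb ω j) hR.le
      exact mul_le_mul h1 (hXsum ω) (abs_nonneg _) (by positivity)
    have int2 : Integrable (fun ω => (Aβ ω j * Xt k ω) * ε ω) μ := by
      refine Integrable.bdd_mul hεint ((hmAβ j).mul (hmXt k)).aestronglyMeasurable
        (c := R ^ 2 * B * R) (Filter.Eventually.of_forall fun ω => ?_)
      rw [Real.norm_eq_abs, abs_mul, hXtabs]
      exact mul_le_mul_of_nonneg_right (hAb ω j) hR.le
    have step4 : ∫ ω, (Aβ ω j * Xt k ω) * Y ω ∂μ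
        = ∫ ω, (Aβ ω j * Xt k ω) * (∑ m, X ω m * βs m) ∂μ := by
      have hrw : ∀ ω, (Aβ ω j * Xt k ω) * Y ω
          = (Aβ ω j * Xt k ω) * (∑ m, X ω m * βs m) + σ * ((Aβ ω j * Xt k ω) * ε ω) := by
        intro ω; rw [hY]; ring
      have hcong := integral_congr_ae (μ := μ)
        (f := fun ω => (Aβ ω j * Xt k ω) * Y ω)
        (g := fun ω => (Aβ ω j * Xt k ω) * (∑ m, X ω m * βs m)
          + σ * ((Aβ ω j * Xt k ω) * ε ω))
        (Filter.Eventually.of_forall fun ω => hrw ω)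
      rw [hcong, integral_add int1 (int2.const_mul σ), integral_const_mul, hεmul,
        mul_zero, add_zero]
    rw [step1, step2, step3, step4]
  -- conclusion
  have hIab : ∀ j k : Fin d, |∫ ω, Aβ ω j * (Xt k ω * Yt ω) ∂μ| ≤ R ^ 4 * B ^ 2 := by
    intro j k
    rw [key j k]
    refine le_trans (habs _ ((R ^ 2 * B * R) * (R * B)) fun ω => ?_) (le_of_eq (by ring))
    rw [abs_mul, abs_mul]
    have h1 : |Aβ ω j| * |Xt k ω| ≤ R ^ 2 * B * R := by
      rw [hXtabs]
      exact mul_le_mul_of_nonneg_right (hAb ω j) hR.le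
    exact mul_le_mul h1 (hXsum ω) (abs_nonneg _) (by positivity)
  intro j k
  have hΓaB : |Γa j k| ≤ R ^ 4 * B ^ 2 := by
    rw [hΓa]
    refine le_trans (habs _ ((R ^ 2 * B) * (R ^ 2 * B)) fun ω => ?_) (le_of_eq (by ring))
    rw [abs_mul]
    exact mul_le_mul (hAb ω j) (hAb ω k) (abs_nonneg _) (by positivity)
  have hΓbB : |Γb j k| ≤ 2 * R ^ 4 * B ^ 2 := by
    rw [hΓb]
    have h2 : ∫ ω, (Xt j ω * Yt ω) * Aβ ω k ∂μ = ∫ ω, Aβ ω k * (Xt j ω * Yt ω) ∂μ := by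
      refine integral_congr_ae (Filter.Eventually.of_forall fun ω => ?_)
      show (Xt j ω * Yt ω) * Aβ ω k = Aβ ω k * (Xt j ω * Yt ω)
      ring
    calc |(∫ ω, Aβ ω j * (Xt k ω * Yt ω) ∂μ) + ∫ ω, (Xt j ω * Yt ω) * Aβ ω k ∂μ|
        ≤ |∫ ω, Aβ ω j * (Xt k ω * Yt ω) ∂μ| + |∫ ω, (Xt j ω * Yt ω) * Aβ ω k ∂μ| :=
          abs_add_le _ _
      _ ≤ R ^ 4 * B ^ 2 + R ^ 4 * B ^ 2 :=
          add_le_add (hIab j k) (by rw [h2]; exact hIab k j)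
      _ = 2 * R ^ 4 * B ^ 2 := by ring
  refine ⟨hΓaB, hΓbB, ?_⟩
  calc |Γa j k - Γb j k| ≤ |Γa j k| + |Γb j k| := abs_sub _ _
    _ ≤ R ^ 4 * B ^ 2 + 2 * R ^ 4 * B ^ 2 := add_le_add hΓaB hΓbB
    _ = 3 * R ^ 4 * B ^ 2 := by ring
end
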